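/- Let T be an unbounded linear operator in X with Y0 = ⋂_{n≥1} D(T^n). Then T is hypercyclic if and only if (T,Y0) is relatively hypercyclic and Y0 is dense in X; in that case RHC(T) = HC(T). -/

import Mathlib

open Set Filter Topology

variable {X : Type*} [NormedAddCommGroup X] [NormedSpace ℝ X] [CompleteSpace X]

/-- The natural domain of the n-th power of an operator `T` with domain `D`:
`D(T^0) = X`, `D(T^{n+1}) = {x ∈ D(T^n) : T^n x ∈ D}`. -/
def pdom (D : Submodule ℝ X) (T : X →ₗ[ℝ] X) : ℕ → Set X
  | 0 => Set.univ
  | n + 1 => {x | x ∈ pdom D T n ∧ (⇑T)^[n] x ∈ (D : Set X)}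

/-- `Y0 = ⋂_{n ≥ 1} D(T^n)`, the maximal dynamical domain. -/
def Y0 (D : Submodule ℝ X) (T : X →ₗ[ℝ] X) : Set X := ⋂ n : ℕ, pdom D T (n + 1)

/-- The orbit of `x` under `T`. -/
def orb (T : X →ₗ[ℝ] X) (x : X) : Set X := Set.range fun n : ℕ => (⇑T)^[n] x

/-- The set of hypercyclic vectors of `T`. -/
def HCset (D : Submodule ℝ X) (T : X →ₗ[ℝ] X) : Set X :=
  {x | x ∈ Y0 D T ∧ Dense (orb T x)}

/-- The set of relatively hypercyclic vectors of `(T, Y)`. -/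
def RHCset (D : Submodule ℝ X) (T : X →ₗ[ℝ] X) (Y : Set X) : Set X :=
  {x | x ∈ Y0 D T ∧ x ≠ 0 ∧ Y ⊆ closure (orb T x ∩ Y)}

/-- `(T, Y)` is topologically transitive (w.r.t. the subspace topology on `Y`). -/
def TT (T : X →ₗ[ℝ] X) (Y : Set X) : Prop :=
  ∀ G H : Set X, IsOpen G → IsOpen H → (G ∩ Y).Nonempty → (H ∩ Y).Nonempty →
    ∃ n : ℕ, ((⇑T)^[n] '' (G ∩ Y) ∩ (H ∩ Y)).Nonempty

/-- `(T, Y)` is mixing. -/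
def Mixing (T : X →ₗ[ℝ] X) (Y : Set X) : Prop :=
  ∀ G H : Set X, IsOpen G → IsOpen H → (G ∩ Y).Nonempty → (H ∩ Y).Nonempty →
    ∃ N : ℕ, ∀ n ≥ N, ((⇑T)^[n] '' (G ∩ Y) ∩ (H ∩ Y)).Nonempty

/-- `(T, Y)` is strongly topologically transitive. -/
def STT (T : X →ₗ[ℝ] X) (Y : Set X) : Prop :=
  ∀ G : Set X, IsOpen G → (G ∩ Y).Nonempty →
    Y \ {0} ⊆ ⋃ n : ℕ, (⇑T)^[n] '' (G ∩ Y)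

/-- `(T, Y)` is hypermixing. -/
def HM (T : X →ₗ[ℝ] X) (Y : Set X) : Prop :=
  ∀ G : Set X, IsOpen G → (G ∩ Y).Nonempty →
    Y \ {0} ⊆ ⋃ i : ℕ, ⋂ n : ℕ, ⋂ (_ : i ≤ n), (⇑T)^[n] '' (G ∩ Y)

/-- `(T, Y)` is supermixing. -/
def SM (T : X →ₗ[ℝ] X) (Y : Set X) : Prop :=
  ∀ G : Set X, IsOpen G → (G ∩ Y).Nonempty →
    Y ⊆ closure ((⋃ i : ℕ, ⋂ n : ℕ, ⋂ (_ : i ≤ n), (⇑T)^[n] '' (G ∩ Y)) ∩ Y)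

/-- The generalized kernel `GK(T) = ⋃_{n ≥ 1} Ker T^n`. -/
def GK (D : Submodule ℝ X) (T : X →ₗ[ℝ] X) : Set X :=
  ⋃ n : ℕ, {x | x ∈ pdom D T (n + 1) ∧ (⇑T)^[n + 1] x = 0}

/-- `T` is hypercyclic iff `(T, Y0)` is relatively hypercyclic and `Y0` is
dense in `X`; in that case `RHC(T) = HC(T)`. -/
lemma pdom_shift (D : Submodule ℝ X) (T : X →ₗ[ℝ] X) :
    ∀ n k (x : X), x ∈ pdom D T (n + k) → (⇑T)^[k] x ∈ pdom D T n := by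
  intro n
  induction n with
  | zero => intro k x _; trivial
  | succ n ih =>
    intro k x hx
    have hx' : x ∈ pdom D T (n + k) ∧ (⇑T)^[n + k] x ∈ (D : Set X) := by
      have : n + 1 + k = (n + k) + 1 := by ring
      rw [this] at hx
      exact hx
    refine ⟨ih k x hx'.1, ?_⟩
    rw [← Function.iterate_add_apply]
    exact hx'.2

lemma orb_subset_Y0 (D : Submodule ℝ X) (T : X →ₗ[ℝ] X) {x : X} (hx : x ∈ Y0 D T) :
    orb T x ⊆ Y0 D T := by
  rintro _ ⟨k, rfl⟩
  intro s hs
  simp only [Set.mem_range] at hs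
  obtain ⟨n, rfl⟩ := hs
  have hxm : x ∈ pdom D T (n + 1 + k) := by
    have := Set.mem_iInter.mp hx (n + k)
    simpa [Nat.add_right_comm] using this
  exact pdom_shift D T (n + 1) k x hxm

lemma hc_ne_zero (hinf : ¬ FiniteDimensional ℝ X) (T : X →ₗ[ℝ] X) {x : X}
    (hd : Dense (orb T x)) : x ≠ 0 := by
  rintro rfl
  have horb : orb T (0 : X) = {0} := by
    ext y
    constructor
    · rintro ⟨n, rfl⟩
      simp [Function.iterate_fixed (map_zero T)]
    · rintro rfl
      exact ⟨0, rfl⟩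
  rw [horb] at hd
  have : closure ({(0 : X)} : Set X) = Set.univ := hd.closure_eq
  rw [closure_singleton] at this
  have : Subsingleton X := by
    constructor
    intro a b
    have ha : a ∈ ({(0 : X)} : Set X) := this ▸ Set.mem_univ a
    have hb : b ∈ ({(0 : X)} : Set X) := this ▸ Set.mem_univ b
    simp at ha hb; rw [ha, hb]
  exact hinf (Module.Finite.of_basis (Module.Basis.empty _ (ι := Empty)))

theorem stmt9 [TopologicalSpace.SeparableSpace X] (hinf : ¬ FiniteDimensional ℝ X)
    (D : Submodule ℝ X) (T : X →ₗ[ℝ] X) :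
    ((∃ x, x ∈ HCset D T) ↔
      (RHCset D T (Y0 D T)).Nonempty ∧ Dense (Y0 D T)) ∧
    ((∃ x, x ∈ HCset D T) → RHCset D T (Y0 D T) = HCset D T) := by
  have hHC_RHC : ∀ x, x ∈ HCset D T → x ∈ RHCset D T (Y0 D T) := by
    rintro x ⟨hxY, hxd⟩
    refine ⟨hxY, hc_ne_zero hinf T hxd, ?_⟩
    have : orb T x ∩ Y0 D T = orb T x :=
      Set.inter_eq_left.mpr (orb_subset_Y0 D T hxY)
    rw [this, hxd.closure_eq]
    exact Set.subset_univ _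
  have hDenseY0 : ∀ x, x ∈ HCset D T → Dense (Y0 D T) := by
    rintro x ⟨hxY, hxd⟩
    exact hxd.mono (orb_subset_Y0 D T hxY)
  have hRHC_HC : Dense (Y0 D T) → ∀ x, x ∈ RHCset D T (Y0 D T) → x ∈ HCset D T := by
    rintro hden x ⟨hxY, _, hsub⟩
    refine ⟨hxY, ?_⟩
    have h1 : Y0 D T ⊆ closure (orb T x) :=
      hsub.trans (closure_mono Set.inter_subset_left)
    have : closure (Y0 D T) ⊆ closure (orb T x) := by
      rw [← closure_closure (s := orb T x)]
      exact closure_mono h1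
    rw [hden.closure_eq] at this
    rw [dense_iff_closure_eq]
    exact Set.eq_univ_of_univ_subset this
  constructor
  · constructor
    · rintro ⟨x, hx⟩
      exact ⟨⟨x, hHC_RHC x hx⟩, hDenseY0 x hx⟩
    · rintro ⟨⟨x, hx⟩, hden⟩
      exact ⟨x, hRHC_HC hden x hx⟩
  · rintro ⟨x, hx⟩
    ext y
    exact ⟨hRHC_HC (hDenseY0 x hx) y, hHC_RHC y⟩
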